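/- Let a, b, c > 0 and m ≥ 3 satisfy 2a ≥ c, c ≥ a, 3a ≥ 2b + c, 2a ≥ 3b, and c ≥ 2b, and let β = (m−2)a + (m+1)b + (1/2)(m−3)(m−2)c + (m−1)c. Then for n with n − m ≥ 4 and m ≤ ⌈(n+1)/2⌉, and indices m < j_3 < ... < j_m ≤ n, the inequality a·x_{m−1} + b·x_m + c·∑_{i=3}^m x_{j_i} ≥ β is valid for all circuits x on {1,...,n}. -/

import Mathlib

/-- A circuit on `{1,...,n}`: a permutation of `Fin n` that is a single `n`-cycle. -/
def IsCircuitPerm {n : ℕ} (σ : Equiv.Perm (Fin n)) : Prop :=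
  σ.IsCycle ∧ σ.support = Finset.univ

lemma sum_distinct_pos (s : Finset ℕ) (h : ∀ x ∈ s, 1 ≤ x) :
    s.card * (s.card + 1) ≤ 2 * ∑ x ∈ s, x := by
  induction s using Finset.strongInduction with
  | _ s ih =>
    rcases s.eq_empty_or_nonempty with rfl | hs
    · simp
    · have hM := s.max'_mem hs
      have hsub : s ⊆ Finset.Icc 1 (s.max' hs) := by
        intro x hx
        exact Finset.mem_Icc.mpr ⟨h x hx, s.le_max' x hx⟩
      have hcard : s.card ≤ s.max' hs := by
        have := Finset.card_le_card hsub
        simpa using this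
      have he : (s.erase (s.max' hs)) ⊂ s := Finset.erase_ssubset hM
      have ihe := ih _ he (fun x hx => h x (Finset.mem_of_mem_erase hx))
      have hce : (s.erase (s.max' hs)).card = s.card - 1 :=
        Finset.card_erase_of_mem hM
      have hsum : ∑ x ∈ s, x = s.max' hs + ∑ x ∈ s.erase (s.max' hs), x :=
        (Finset.add_sum_erase s id hM).symm
      have hpos : 1 ≤ s.card := Finset.card_pos.mpr hs
      obtain ⟨j, hj⟩ : ∃ j, s.card = j + 1 := ⟨s.card - 1, by omega⟩
      rw [hce] at ihe
      rw [hj] at ihe hcard ⊢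
      rw [Nat.add_sub_cancel] at ihe
      nlinarith [hsum, hcard, ihe]


lemma main_ineq (k : ℕ) (a b c : ℝ)
    (ha : 0 < a) (hb : 0 < b) (hc : 0 < c)
    (h1 : c ≤ 2 * a) (h2 : a ≤ c) (h3 : 2 * b + c ≤ 3 * a) (h4 : 3 * b ≤ 2 * a)
    (h5 : 2 * b ≤ c)
    (y z S : ℕ)
    (hyne : y ≠ k + 2) (hzne : z ≠ k + 3) (hswap : ¬(y = k + 3 ∧ z = k + 2))
    (hS2 : (k + 3) * (k + 4) ≤ 2 * (S + y + z))
    (hS1y : (k + 2) * (k + 3) ≤ 2 * (S + y))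
    (hS1z : (k + 2) * (k + 3) ≤ 2 * (S + z))
    (hS0 : (k + 1) * (k + 2) ≤ 2 * S) :
    ((k : ℝ) + 1) * a + ((k : ℝ) + 4) * b + (1 / 2) * (k : ℝ) * ((k : ℝ) + 1) * c +
        ((k : ℝ) + 2) * c ≤ a * y + b * z + c * S := by
  have hS2' : ((k : ℝ) + 3) * ((k : ℝ) + 4) ≤ 2 * ((S : ℝ) + y + z) := by exact_mod_cast hS2
  have hS1y' : ((k : ℝ) + 2) * ((k : ℝ) + 3) ≤ 2 * ((S : ℝ) + y) := by exact_mod_cast hS1y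
  have hS1z' : ((k : ℝ) + 2) * ((k : ℝ) + 3) ≤ 2 * ((S : ℝ) + z) := by exact_mod_cast hS1z
  have hS0' : ((k : ℝ) + 1) * ((k : ℝ) + 2) ≤ 2 * (S : ℝ) := by exact_mod_cast hS0
  rcases (by omega : y ≤ k + 1 ∨ y = k + 3 ∨ k + 4 ≤ y) with hy | hy | hy <;>
    rcases (by omega : z ≤ k + 1 ∨ z = k + 2 ∨ k + 4 ≤ z) with hz | hz | hz
  · -- c1
    have hy' : (y : ℝ) ≤ (k : ℝ) + 1 := by exact_mod_cast hy
    have hz' : (z : ℝ) ≤ (k : ℝ) + 1 := by exact_mod_cast hz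
    have f1 : 0 ≤ (c - a) * (((k : ℝ) + 1) - y) := mul_nonneg (by linarith) (by linarith)
    have f2 : 0 ≤ (c - b) * (((k : ℝ) + 1) - z) := mul_nonneg (by linarith) (by linarith)
    have f3 : 0 ≤ c * (2 * (S : ℝ) + 2 * y + 2 * z - ((k : ℝ) + 3) * ((k : ℝ) + 4)) := mul_nonneg hc.le (by linarith)
    linarith [f1, f2, f3]
  · -- c2
    have hy' : (y : ℝ) ≤ (k : ℝ) + 1 := by exact_mod_cast hy
    have hz' : (z : ℝ) = (k : ℝ) + 2 := by exact_mod_cast hz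
    rw [hz']
    have f1 : 0 ≤ (c - a) * (((k : ℝ) + 1) - y) := mul_nonneg (by linarith) (by linarith)
    have f3 : 0 ≤ c * (2 * (S : ℝ) + 2 * y + 2 * ((k : ℝ) + 2) - ((k : ℝ) + 3) * ((k : ℝ) + 4)) :=
      mul_nonneg hc.le (by linarith)
    linarith [f1, f3]
  · -- c3
    have hy' : (y : ℝ) ≤ (k : ℝ) + 1 := by exact_mod_cast hy
    have hz' : (k : ℝ) + 4 ≤ (z : ℝ) := by exact_mod_cast hz
    have f1 : 0 ≤ (c - a) * (((k : ℝ) + 1) - y) := mul_nonneg (by linarith) (by linarith)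
    have f4 : 0 ≤ b * ((z : ℝ) - ((k : ℝ) + 4)) := mul_nonneg hb.le (by linarith)
    have f3 : 0 ≤ c * (2 * (S : ℝ) + 2 * y - ((k : ℝ) + 2) * ((k : ℝ) + 3)) := mul_nonneg hc.le (by linarith)
    linarith [f1, f4, f3]
  · -- c4
    have hy' : (y : ℝ) = (k : ℝ) + 3 := by exact_mod_cast hy
    have hz' : (z : ℝ) ≤ (k : ℝ) + 1 := by exact_mod_cast hz
    rw [hy']
    have f2 : 0 ≤ (c - b) * (((k : ℝ) + 1) - z) := mul_nonneg (by linarith) (by linarith)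
    have f3 : 0 ≤ c * (2 * (S : ℝ) + 2 * ((k : ℝ) + 3) + 2 * z - ((k : ℝ) + 3) * ((k : ℝ) + 4)) :=
      mul_nonneg hc.le (by linarith)
    linarith [f2, f3]
  · -- c5 forbidden
    exact absurd ⟨hy, hz⟩ hswap
  · -- c6
    have hy' : (y : ℝ) = (k : ℝ) + 3 := by exact_mod_cast hy
    have hz' : (k : ℝ) + 4 ≤ (z : ℝ) := by exact_mod_cast hz
    rw [hy']
    have f4 : 0 ≤ b * ((z : ℝ) - ((k : ℝ) + 4)) := mul_nonneg hb.le (by linarith)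
    have f3 : 0 ≤ c * (2 * (S : ℝ) - ((k : ℝ) + 1) * ((k : ℝ) + 2)) := mul_nonneg hc.le (by linarith)
    linarith [f4, f3]
  · -- c7
    have hy' : (k : ℝ) + 4 ≤ (y : ℝ) := by exact_mod_cast hy
    have hz' : (z : ℝ) ≤ (k : ℝ) + 1 := by exact_mod_cast hz
    have fa : 0 ≤ a * ((y : ℝ) - ((k : ℝ) + 4)) := mul_nonneg ha.le (by linarith)
    have f2 : 0 ≤ (c - b) * (((k : ℝ) + 1) - z) := mul_nonneg (by linarith) (by linarith)
    have f3 : 0 ≤ c * (2 * (S : ℝ) + 2 * z - ((k : ℝ) + 2) * ((k : ℝ) + 3)) := mul_nonneg hc.le (by linarith)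
    linarith [fa, f2, f3]
  · -- c8
    have hy' : (k : ℝ) + 4 ≤ (y : ℝ) := by exact_mod_cast hy
    have hz' : (z : ℝ) = (k : ℝ) + 2 := by exact_mod_cast hz
    rw [hz']
    have fa : 0 ≤ a * ((y : ℝ) - ((k : ℝ) + 4)) := mul_nonneg ha.le (by linarith)
    have f3 : 0 ≤ c * (2 * (S : ℝ) - ((k : ℝ) + 1) * ((k : ℝ) + 2)) := mul_nonneg hc.le (by linarith)
    linarith [fa, f3]
  · -- c9
    have hy' : (k : ℝ) + 4 ≤ (y : ℝ) := by exact_mod_cast hy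
    have hz' : (k : ℝ) + 4 ≤ (z : ℝ) := by exact_mod_cast hz
    have fa : 0 ≤ a * ((y : ℝ) - ((k : ℝ) + 4)) := mul_nonneg ha.le (by linarith)
    have f4 : 0 ≤ b * ((z : ℝ) - ((k : ℝ) + 4)) := mul_nonneg hb.le (by linarith)
    have f3 : 0 ≤ c * (2 * (S : ℝ) - ((k : ℝ) + 1) * ((k : ℝ) + 2)) := mul_nonneg hc.le (by linarith)
    linarith [fa, f4, f3]


lemma no_swap {n : ℕ} (σ : Equiv.Perm (Fin n)) (hcyc : σ.IsCycle)
    (hsupp : σ.support = Finset.univ)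
    (p q w : Fin n) (hwp : w ≠ p) (hwq : w ≠ q)
    (hσp : σ p = q) (hσq : σ q = p) : False := by
  have hfix : ∀ i : Fin n, σ i ≠ i := fun i =>
    Equiv.Perm.mem_support.mp (by rw [hsupp]; exact Finset.mem_univ i)
  have key : ∀ i : ℤ, ((σ ^ i) p = p ∧ (σ ^ i) q = q) ∨
      ((σ ^ i) p = q ∧ (σ ^ i) q = p) := by
    intro i
    induction i using Int.induction_on with
    | zero => left; simp
    | succ j ih =>
      have ep : (σ ^ ((j : ℤ) + 1)) p = (σ ^ (j : ℤ)) (σ p) := by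
        rw [zpow_add_one, Equiv.Perm.mul_apply]
      have eq' : (σ ^ ((j : ℤ) + 1)) q = (σ ^ (j : ℤ)) (σ q) := by
        rw [zpow_add_one, Equiv.Perm.mul_apply]
      rw [ep, eq', hσp, hσq]
      tauto
    | pred j ih =>
      have hip : σ⁻¹ p = q := by rw [← hσq]; simp
      have hiq : σ⁻¹ q = p := by rw [← hσp]; simp
      have ep : (σ ^ (-(j : ℤ) - 1)) p = (σ ^ (-(j : ℤ))) (σ⁻¹ p) := by
        rw [zpow_sub_one, Equiv.Perm.mul_apply]
      have eq' : (σ ^ (-(j : ℤ) - 1)) q = (σ ^ (-(j : ℤ))) (σ⁻¹ q) := by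
        rw [zpow_sub_one, Equiv.Perm.mul_apply]
      rw [ep, eq', hip, hiq]
      tauto
  obtain ⟨x₀, hx₀, hall⟩ := hcyc
  have h1 : σ.SameCycle x₀ p := hall (hfix p)
  have h2 : σ.SameCycle x₀ w := hall (hfix w)
  obtain ⟨i, hi⟩ := h1.symm.trans h2
  rcases key i with ⟨hp', _⟩ | ⟨hp', _⟩
  · exact hwp (hi.symm.trans hp')
  · exact hwq (hi.symm.trans hp')

/-- The general level-2 family: if `a, b, c > 0` and `m ≥ 3` satisfy
`2a ≥ c`, `c ≥ a`, `3a ≥ 2b + c`, `2a ≥ 3b`, `c ≥ 2b`, and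
`β = (m−2)a + (m+1)b + ½(m−3)(m−2)c + (m−1)c`, then for indices
`j_3 < ⋯ < j_m` greater than `m` (collected in `T`, 0-based `m ≤ j`), every
circuit `x` on `{1,…,n}` (with `x_i = σ(i) + 1`) satisfies
`a·x_{m−1} + b·x_m + c·∑_{i=3}^m x_{j_i} ≥ β`. -/
theorem stmt_16 (n m : ℕ) (a b c : ℝ) (ha : 0 < a) (hb : 0 < b) (hc : 0 < c)
    (h1 : c ≤ 2 * a) (h2 : a ≤ c) (h3 : 2 * b + c ≤ 3 * a) (h4 : 3 * b ≤ 2 * a)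
    (h5 : 2 * b ≤ c)
    (hm3 : 3 ≤ m) (hnm : 4 ≤ n - m) (hmc : m ≤ (n + 2) / 2)
    (T : Finset (Fin n)) (hT : T.card = m - 2) (hTi : ∀ j ∈ T, m ≤ (j : ℕ))
    (σ : Equiv.Perm (Fin n)) (hσ : IsCircuitPerm σ) :
    ((m : ℝ) - 2) * a + ((m : ℝ) + 1) * b + (1 / 2) * ((m : ℝ) - 3) * ((m : ℝ) - 2) * c +
        ((m : ℝ) - 1) * c ≤
      a * (((σ ⟨m - 2, by omega⟩ : Fin n) : ℕ) + 1 : ℝ) +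
      b * (((σ ⟨m - 1, by omega⟩ : Fin n) : ℕ) + 1 : ℝ) +
      c * ∑ j ∈ T, ((((σ j : Fin n) : ℕ) : ℝ) + 1) := by
  obtain ⟨hcyc, hsupp⟩ := hσ
  have hn : m + 4 ≤ n := by omega
  obtain ⟨k, rfl⟩ : ∃ k, m = k + 3 := ⟨m - 3, by omega⟩
  have hkn : k + 7 ≤ n := by omega
  have hfix : ∀ i : Fin n, σ i ≠ i := fun i =>
    Equiv.Perm.mem_support.mp (by rw [hsupp]; exact Finset.mem_univ i)
  set p : Fin n := ⟨k + 1, by omega⟩ with hpd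
  set q : Fin n := ⟨k + 2, by omega⟩ with hqd
  have hpv : (p : ℕ) = k + 1 := rfl
  have hqv : (q : ℕ) = k + 2 := rfl
  show ((↑(k + 3) : ℝ) - 2) * a + ((↑(k + 3) : ℝ) + 1) * b +
      (1 / 2) * ((↑(k + 3) : ℝ) - 3) * ((↑(k + 3) : ℝ) - 2) * c + ((↑(k + 3) : ℝ) - 1) * c ≤
      a * (((σ p : Fin n) : ℕ) + 1 : ℝ) + b * (((σ q : Fin n) : ℕ) + 1 : ℝ) +
      c * ∑ j ∈ T, ((((σ j : Fin n) : ℕ) : ℝ) + 1)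
  set y : ℕ := ((σ p : Fin n) : ℕ) + 1 with hyd
  set z : ℕ := ((σ q : Fin n) : ℕ) + 1 with hzd
  set Sn : ℕ := ∑ j ∈ T, (((σ j : Fin n) : ℕ) + 1) with hSnd
  -- basic facts
  have hyne : y ≠ k + 2 := by
    intro h
    apply hfix p
    apply Fin.ext
    omega
  have hzne : z ≠ k + 3 := by
    intro h
    apply hfix q
    apply Fin.ext
    omega
  have hswap : ¬(y = k + 3 ∧ z = k + 2) := by
    rintro ⟨hy, hz⟩
    have hσp : σ p = q := Fin.ext (by omega)
    have hσq : σ q = p := Fin.ext (by omega)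
    refine no_swap σ hcyc hsupp p q ⟨k + 4, by omega⟩ ?_ ?_ hσp hσq
    · intro h
      have := congrArg Fin.val h
      have e : ((⟨k + 4, by omega⟩ : Fin n) : ℕ) = k + 4 := rfl
      omega
    · intro h
      have := congrArg Fin.val h
      have e : ((⟨k + 4, by omega⟩ : Fin n) : ℕ) = k + 4 := rfl
      omega
  -- the image multiset of values
  set W : Finset ℕ := T.image (fun j => ((σ j : Fin n) : ℕ) + 1) with hWd
  have hinj : ∀ x ∈ T, ∀ x' ∈ T, ((σ x : Fin n) : ℕ) + 1 = ((σ x' : Fin n) : ℕ) + 1 → x = x' := by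
    intro x _ x' _ h
    exact σ.injective (Fin.ext (by omega))
  have hWcard : W.card = k + 1 := by
    rw [hWd, Finset.card_image_of_injOn hinj, hT]
    omega
  have hW1 : ∀ x ∈ W, 1 ≤ x := by
    intro x hx
    simp only [hWd, Finset.mem_image] at hx
    obtain ⟨j, _, rfl⟩ := hx
    omega
  have hSnW : Sn = ∑ w ∈ W, w := by
    rw [hSnd, hWd, Finset.sum_image hinj]
  have hyW : y ∉ W := by
    intro h
    simp only [hWd, Finset.mem_image] at h
    obtain ⟨j, hj, hje⟩ := h
    have hjp : j = p := σ.injective (Fin.ext (by omega))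
    have hjv := hTi j hj
    rw [hjp] at hjv
    omega
  have hzW : z ∉ W := by
    intro h
    simp only [hWd, Finset.mem_image] at h
    obtain ⟨j, hj, hje⟩ := h
    have hjq : j = q := σ.injective (Fin.ext (by omega))
    have hjv := hTi j hj
    rw [hjq] at hjv
    omega
  have hyz : y ≠ z := by
    intro h
    have hpq : p = q := σ.injective (Fin.ext (by omega))
    have := congrArg Fin.val hpq
    omega
  -- the four sum lower bounds
  have hS0 : (k + 1) * (k + 2) ≤ 2 * Sn := by
    have hsd := sum_distinct_pos W hW1
    rw [hWcard] at hsd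
    rw [hSnW]
    have e : (k + 1) * (k + 1 + 1) = (k + 1) * (k + 2) := by ring
    omega
  have hS1y : (k + 2) * (k + 3) ≤ 2 * (Sn + y) := by
    have h1' : ∀ x ∈ insert y W, 1 ≤ x := by
      intro x hx
      rcases Finset.mem_insert.mp hx with rfl | hx
      · omega
      · exact hW1 x hx
    have hsd := sum_distinct_pos (insert y W) h1'
    rw [Finset.card_insert_of_notMem hyW, hWcard, Finset.sum_insert hyW] at hsd
    rw [hSnW]
    have e : (k + 1 + 1) * (k + 1 + 1 + 1) = (k + 2) * (k + 3) := by ring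
    omega
  have hS1z : (k + 2) * (k + 3) ≤ 2 * (Sn + z) := by
    have h1' : ∀ x ∈ insert z W, 1 ≤ x := by
      intro x hx
      rcases Finset.mem_insert.mp hx with rfl | hx
      · omega
      · exact hW1 x hx
    have hsd := sum_distinct_pos (insert z W) h1'
    rw [Finset.card_insert_of_notMem hzW, hWcard, Finset.sum_insert hzW] at hsd
    rw [hSnW]
    have e : (k + 1 + 1) * (k + 1 + 1 + 1) = (k + 2) * (k + 3) := by ring
    omega
  have hS2 : (k + 3) * (k + 4) ≤ 2 * (Sn + y + z) := by
    have hyzW : y ∉ insert z W := by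
      intro h
      rcases Finset.mem_insert.mp h with h | h
      · exact hyz h
      · exact hyW h
    have h1' : ∀ x ∈ insert y (insert z W), 1 ≤ x := by
      intro x hx
      rcases Finset.mem_insert.mp hx with rfl | hx
      · omega
      rcases Finset.mem_insert.mp hx with rfl | hx
      · omega
      · exact hW1 x hx
    have hsd := sum_distinct_pos (insert y (insert z W)) h1'
    rw [Finset.card_insert_of_notMem hyzW, Finset.card_insert_of_notMem hzW, hWcard,
      Finset.sum_insert hyzW, Finset.sum_insert hzW] at hsd
    rw [hSnW]
    have e : (k + 1 + 1 + 1) * (k + 1 + 1 + 1 + 1) = (k + 3) * (k + 4) := by ring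
    omega
  have H := main_ineq k a b c ha hb hc h1 h2 h3 h4 h5 y z Sn hyne hzne hswap hS2 hS1y hS1z hS0
  rw [hyd, hzd, hSnd] at H
  push_cast at H ⊢
  linarith [H]
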